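/- Let S = M^1_{\geq 0} \times \cdots \times M^d_{\geq 0} with each M^i a nonzero subgroup of \mathbb{R}. Call an ideal set P \subsetneq S 'm-prime' if for all f, g \in S, f + g \in P implies f \in P or g \in P. Then P is m-prime if and only if there is a subset T \subseteq {1,...,d} such that P = Q_T := { s \in S : s_i > 0 for some i \in T }. -/

import Mathlib

/-- The semigroup `S = M^1_{≥0} × ⋯ × M^d_{≥0}`, realized as a subset of `Fin d → ℝ`. -/
def Sset {d : ℕ} (M : Fin d → AddSubgroup ℝ) : Set (Fin d → ℝ) :=
  {s | ∀ i, s i ∈ M i ∧ 0 ≤ s i}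

/-- The "monomial ideal set" (up-set) generated by `T ⊆ S`. -/
def Up {d : ℕ} (M : Fin d → AddSubgroup ℝ) (T : Set (Fin d → ℝ)) : Set (Fin d → ℝ) :=
  {s | ∃ t ∈ T, ∃ u ∈ Sset M, s = t + u}

/-- An ideal set of `S`: a subset of `S` closed under adding arbitrary elements of `S`. -/
def IsIdealSet {d : ℕ} (M : Fin d → AddSubgroup ℝ) (I : Set (Fin d → ℝ)) : Prop :=
  I ⊆ Sset M ∧ ∀ s ∈ I, ∀ u ∈ Sset M, s + u ∈ I

/-- The m-prime ideal set `Q_T = {s ∈ S | s i > 0 for some i ∈ T}`. -/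
def QT {d : ℕ} (M : Fin d → AddSubgroup ℝ) (T : Finset (Fin d)) : Set (Fin d → ℝ) :=
  {s ∈ Sset M | ∃ i ∈ T, 0 < s i}

/-- An m-prime ideal set: a proper ideal set `P` with `f + g ∈ P → f ∈ P ∨ g ∈ P`. -/
def IsMPrime {d : ℕ} (M : Fin d → AddSubgroup ℝ) (P : Set (Fin d → ℝ)) : Prop :=
  IsIdealSet M P ∧ P ≠ Sset M ∧
    ∀ f ∈ Sset M, ∀ g ∈ Sset M, f + g ∈ P → f ∈ P ∨ g ∈ P

/-- An m-irreducible ideal set. -/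
def MIrred {d : ℕ} (M : Fin d → AddSubgroup ℝ) (I : Set (Fin d → ℝ)) : Prop :=
  IsIdealSet M I ∧ I ≠ Sset M ∧
    ∀ J K : Set (Fin d → ℝ), IsIdealSet M J → IsIdealSet M K → I = J ∩ K → I = J ∨ I = K

/-- Monomial Krull dimension: `sup {d - |T| : Q_T ⊇ I}` (m-primes are exactly the `Q_T`). -/
noncomputable def mdim {d : ℕ} (M : Fin d → AddSubgroup ℝ) (I : Set (Fin d → ℝ)) : ℕ :=
  sSup {n : ℕ | ∃ T : Finset (Fin d), I ⊆ QT M T ∧ n = d - T.card}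

/-- Euclidean distance between exponent vectors. -/
noncomputable def myDist {d : ℕ} (γ δ : Fin d → ℝ) : ℝ :=
  Real.sqrt (∑ i, (γ i - δ i) ^ 2)

/-- `dist(I,J) < ε` in the sense of Definition 4.5 of the paper. -/
def DistLT {d : ℕ} (ε : ℝ) (I J : Set (Fin d → ℝ)) : Prop :=
  (∀ γ ∈ I, ∃ δ ∈ J, myDist γ δ < ε) ∧ (∀ δ ∈ J, ∃ γ ∈ I, myDist γ δ < ε)

/-- Distance between ideal sets (Definition 4.6). -/
noncomputable def idealDist {d : ℕ} (I J : Set (Fin d → ℝ)) : ℝ :=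
  sInf {ε : ℝ | 0 < ε ∧ DistLT ε I J}

/-- Finitely generated ideal set. -/
def IsFG {d : ℕ} (M : Fin d → AddSubgroup ℝ) (I : Set (Fin d → ℝ)) : Prop :=
  ∃ G : Finset (Fin d → ℝ), ↑G ⊆ Sset M ∧ I = Up M ↑G

/-- an ideal set is m-prime iff it is `Q_T` for some `T ⊆ {1,…,d}`. -/
theorem stmt4 (d : ℕ) (M : Fin d → AddSubgroup ℝ) (hM : ∀ i, M i ≠ ⊥)
    (P : Set (Fin d → ℝ)) (hP : IsIdealSet M P) :
    (P ≠ Sset M ∧ ∀ f ∈ Sset M, ∀ g ∈ Sset M, f + g ∈ P → f ∈ P ∨ g ∈ P)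
      ↔ ∃ T : Finset (Fin d), P = QT M T := by

  classical
  obtain ⟨hPS, hIdeal⟩ := hP
  have hS0 : (0 : Fin d → ℝ) ∈ Sset M := fun i => ⟨(M i).zero_mem, le_refl 0⟩
  have hSadd : ∀ f ∈ Sset M, ∀ g ∈ Sset M, f + g ∈ Sset M := by
    intro f hf g hg i
    exact ⟨(M i).add_mem (hf i).1 (hg i).1, add_nonneg (hf i).2 (hg i).2⟩
  have hnsmul : ∀ s ∈ Sset M, ∀ n : ℕ, n • s ∈ Sset M := by
    intro s hs n i
    have : (n • s) i = (n : ℝ) * s i := by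
      simp [Pi.smul_apply, nsmul_eq_mul]
    rw [this]
    constructor
    · have := AddSubgroup.nsmul_mem (M i) (hs i).1 n
      simpa [nsmul_eq_mul] using this
    · exact mul_nonneg (Nat.cast_nonneg n) (hs i).2
  constructor
  · rintro ⟨hne, hprime⟩
    have h0P : (0 : Fin d → ℝ) ∉ P := by
      intro h0
      apply hne
      apply Set.Subset.antisymm hPS
      intro u hu
      simpa using hIdeal 0 h0 u hu
    have ha : ∀ i, ∃ a : ℝ, a ∈ M i ∧ 0 < a := by
      intro i
      obtain ⟨⟨x, hxM⟩, hx0⟩ := AddSubgroup.ne_bot_iff_exists_ne_zero.mp (hM i)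
      have hx0' : x ≠ 0 := fun h => hx0 (Subtype.ext h)
      rcases lt_or_gt_of_ne hx0' with h | h
      · exact ⟨-x, (M i).neg_mem hxM, by linarith⟩
      · exact ⟨x, hxM, h⟩
    choose a haM hapos using ha
    set v : Fin d → (Fin d → ℝ) := fun i => Pi.single i (a i) with hv
    have hvS : ∀ i, v i ∈ Sset M := by
      intro i j
      rcases eq_or_ne j i with rfl | hji
      · simpa [hv] using ⟨haM j, (hapos j).le⟩
      · rw [show v i j = 0 by simp [hv, Pi.single_eq_of_ne hji]]
        exact ⟨(M j).zero_mem, le_refl 0⟩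
    have hdesc : ∀ (n : ℕ) (s : Fin d → ℝ), s ∈ Sset M → (n + 1) • s ∈ P → s ∈ P := by
      intro n
      induction n with
      | zero => intro s hs h; simpa using h
      | succ n ih =>
        intro s hs h
        rw [succ_nsmul] at h
        rcases hprime _ (hnsmul s hs (n + 1)) s hs h with h' | h'
        · exact ih s hs h'
        · exact h'
    refine ⟨Finset.univ.filter (fun i => v i ∈ P), ?_⟩
    ext s
    simp only [QT, Set.mem_setOf_eq, Finset.mem_filter, Finset.mem_univ, true_and]
    constructor
    · intro hsP
      have hsS := hPS hsP
      have hsingleS : ∀ i, Pi.single i (s i) ∈ Sset M := by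
        intro i j
        rcases eq_or_ne j i with rfl | hji
        · simpa using (hsS j)
        · rw [Pi.single_eq_of_ne hji]
          exact ⟨(M j).zero_mem, le_refl 0⟩
      have hsumS : ∀ A : Finset (Fin d), (∑ i ∈ A, Pi.single i (s i)) ∈ Sset M := by
        intro A
        induction A using Finset.induction with
        | empty => simpa using hS0
        | insert _ _ hx ih =>
          rw [Finset.sum_insert hx]
          exact hSadd _ (hsingleS _) _ ih
      have hfin : ∀ A : Finset (Fin d), (∑ i ∈ A, Pi.single i (s i)) ∈ P →
          ∃ i ∈ A, Pi.single i (s i) ∈ P := by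
        intro A
        induction A using Finset.induction with
        | empty => intro h; simp at h; exact absurd h h0P
        | @insert x A hx ih =>
          intro h
          rw [Finset.sum_insert hx] at h
          rcases hprime _ (hsingleS x) _ (hsumS A) h with h' | h'
          · exact ⟨x, Finset.mem_insert_self x A, h'⟩
          · obtain ⟨i, hiA, hi⟩ := ih h'
            exact ⟨i, Finset.mem_insert_of_mem hiA, hi⟩
      have hsum : (∑ i, Pi.single i (s i)) = s := Finset.univ_sum_single s
      obtain ⟨i, -, hiP⟩ := hfin Finset.univ (by rwa [hsum])
      have hsi : 0 < s i := by
        rcases (hsS i).2.lt_or_eq with h | h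
        · exact h
        · exfalso; apply h0P; rw [show (0 : Fin d → ℝ) = Pi.single i (s i) by
            funext j; rcases eq_or_ne j i with rfl | hji
            · simp [← h]
            · simp [Pi.single_eq_of_ne hji]]
          exact hiP
      refine ⟨hsS, i, ?_, hsi⟩
      -- show v i ∈ P
      obtain ⟨n, hn⟩ := exists_nat_ge (s i / a i)
      have hn1 : 1 ≤ n := by
        rcases Nat.eq_zero_or_pos n with rfl | h
        · exfalso
          have := div_pos hsi (hapos i)
          simp at hn
          linarith
        · exact h
      have hnai : s i ≤ (n : ℝ) * a i := by
        rw [div_le_iff₀ (hapos i)] at hn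
        linarith
      -- n • v i = Pi.single i (s i) + w with w ∈ Sset
      have hw : (n • v i - Pi.single i (s i)) ∈ Sset M := by
        intro j
        rcases eq_or_ne j i with rfl | hji
        · constructor
          · have h1 : ((n • v j - Pi.single j (s j) : Fin d → ℝ) j) = (n : ℝ) * a j - s j := by
              simp [hv, nsmul_eq_mul, Pi.single_eq_same]
            rw [h1]
            exact (M j).sub_mem (by simpa [nsmul_eq_mul] using AddSubgroup.nsmul_mem (M j) (haM j) n) (hsS j).1
          · have h1 : ((n • v j - Pi.single j (s j) : Fin d → ℝ) j) = (n : ℝ) * a j - s j := by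
              simp [hv, nsmul_eq_mul, Pi.single_eq_same]
            rw [h1]; linarith
        · have h1 : ((n • v i - Pi.single i (s i) : Fin d → ℝ) j) = 0 := by
            simp [hv, Pi.single_eq_of_ne hji]
          rw [h1]
          exact ⟨(M j).zero_mem, le_refl 0⟩
      have hnvP : n • v i ∈ P := by
        have heq : n • v i = Pi.single i (s i) + (n • v i - Pi.single i (s i)) := by ring
        rw [heq]
        exact hIdeal _ hiP _ hw
      obtain ⟨m, rfl⟩ := Nat.exists_eq_add_of_le hn1
      exact hdesc m (v i) (hvS i) (by rwa [add_comm] at hnvP)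
    · rintro ⟨hsS, i, hiT, hsi⟩
      obtain ⟨n, hn⟩ := exists_nat_ge (a i / s i)
      have hn1 : 1 ≤ n := by
        rcases Nat.eq_zero_or_pos n with rfl | h
        · exfalso
          have := div_pos (hapos i) hsi
          simp at hn
          linarith
        · exact h
      have hnai : a i ≤ (n : ℝ) * s i := by
        rw [div_le_iff₀ hsi] at hn
        linarith
      have hw : (n • s - v i) ∈ Sset M := by
        intro j
        rcases eq_or_ne j i with rfl | hji
        · have h1 : ((n • s - v j : Fin d → ℝ) j) = (n : ℝ) * s j - a j := by
            simp [hv, nsmul_eq_mul, Pi.single_eq_same]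
          rw [h1]
          exact ⟨(M j).sub_mem (by simpa [nsmul_eq_mul] using AddSubgroup.nsmul_mem (M j) (hsS j).1 n) (haM j), by linarith⟩
        · have h1 : ((n • s - v i : Fin d → ℝ) j) = (n : ℝ) * s j := by
            simp [hv, nsmul_eq_mul, Pi.single_eq_of_ne hji]
          rw [h1]
          exact ⟨by simpa [nsmul_eq_mul] using AddSubgroup.nsmul_mem (M j) (hsS j).1 n,
            mul_nonneg (Nat.cast_nonneg n) (hsS j).2⟩
      have hnsP : n • s ∈ P := by
        have heq : n • s = v i + (n • s - v i) := by ring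
        rw [heq]
        exact hIdeal _ hiT _ hw
      obtain ⟨m, rfl⟩ := Nat.exists_eq_add_of_le hn1
      exact hdesc m s hsS (by rwa [add_comm] at hnsP)
  · rintro ⟨T, rfl⟩
    constructor
    · intro h
      have h0 : (0 : Fin d → ℝ) ∈ QT M T := h ▸ hS0
      obtain ⟨-, i, -, hlt⟩ := h0
      exact lt_irrefl 0 hlt
    · intro f hf g hg hfg
      obtain ⟨-, i, hiT, hlt⟩ := hfg
      rcases lt_or_ge 0 (f i) with h | h
      · exact Or.inl ⟨hf, i, hiT, h⟩
      · refine Or.inr ⟨hg, i, hiT, ?_⟩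
        have := (hf i).2
        have hfi : f i = 0 := le_antisymm h this
        simpa [hfi] using hlt
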